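/- Let u, v, w be unit vectors in ℝ². Suppose arccos|⟨u, v⟩| ≥ 1.34, arccos|⟨u, w⟩| ≤ arccos|⟨u, v⟩|, and arccos|⟨v, w⟩| ≤ arccos|⟨u, v⟩| (i.e., the angle between the lines of u and v is at least 1.34 and is the largest among the three pairwise line angles). Then |⟨u, w⟩|^{1.3} + |⟨v, w⟩|^{1.3} ≥ 1. -/

import Mathlib

set_option maxHeartbeats 1000000
open RealInnerProductSpace
-- tangent line lower bound for x^1.3
lemma tan13 {x lam : ℝ} (hx : 0 ≤ x) (hlam : 0 < lam) :
    lam ^ (1.3:ℝ) + (1.3:ℝ) * lam ^ (0.3:ℝ) * (x - lam) ≤ x ^ (1.3:ℝ) := by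
  have hs : (-1:ℝ) ≤ x / lam - 1 := by
    have : 0 ≤ x / lam := div_nonneg hx hlam.le
    linarith
  have hb := one_add_mul_self_le_rpow_one_add hs (by norm_num : (1:ℝ) ≤ 1.3)
  have hxl : 1 + (x / lam - 1) = x / lam := by ring
  rw [hxl] at hb
  have hdiv : (x / lam) ^ (1.3:ℝ) = x ^ (1.3:ℝ) / lam ^ (1.3:ℝ) :=
    Real.div_rpow hx hlam.le _
  rw [hdiv] at hb
  have hpow : (0:ℝ) < lam ^ (1.3:ℝ) := Real.rpow_pos_of_pos hlam _
  have h2 : lam ^ (1.3:ℝ) * (1 + 1.3 * (x / lam - 1)) ≤ x ^ (1.3:ℝ) := by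
    calc lam ^ (1.3:ℝ) * (1 + 1.3 * (x / lam - 1))
        ≤ lam ^ (1.3:ℝ) * (x ^ (1.3:ℝ) / lam ^ (1.3:ℝ)) := by
          apply mul_le_mul_of_nonneg_left hb hpow.le
      _ = x ^ (1.3:ℝ) := by field_simp
  have key : lam ^ (1.3:ℝ) = lam ^ (0.3:ℝ) * lam := by
    rw [show (1.3:ℝ) = 0.3 + 1 by norm_num, Real.rpow_add hlam, Real.rpow_one]
  calc lam ^ (1.3:ℝ) + 1.3 * lam ^ (0.3:ℝ) * (x - lam)
      = lam ^ (1.3:ℝ) * (1 + 1.3 * (x / lam - 1)) := by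
        rw [key]; field_simp
    _ ≤ x ^ (1.3:ℝ) := h2

-- rational lower bound for lam^0.3
lemma low03 {lam q : ℝ} (hlam : 0 ≤ lam) (hq : 0 ≤ q) (h : q ^ 10 ≤ lam ^ 3) :
    q ≤ lam ^ (0.3:ℝ) := by
  have h1 : (q ^ (10:ℕ) : ℝ) ^ ((1:ℝ)/10) ≤ (lam ^ (3:ℕ) : ℝ) ^ ((1:ℝ)/10) :=
    Real.rpow_le_rpow (by positivity) h (by norm_num)
  rwa [← Real.rpow_natCast q 10, ← Real.rpow_natCast lam 3,
      ← Real.rpow_mul hq, ← Real.rpow_mul hlam,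
      show ((10:ℕ):ℝ) * ((1:ℝ)/10) = 1 by norm_num,
      show ((3:ℕ):ℝ) * ((1:ℝ)/10) = (0.3:ℝ) by norm_num,
      Real.rpow_one] at h1

-- rational upper bound for lam^1.3
lemma up13 {lam r : ℝ} (hlam : 0 ≤ lam) (hr : 0 ≤ r) (h : lam ^ 13 ≤ r ^ 10) :
    lam ^ (1.3:ℝ) ≤ r := by
  have h1 : (lam ^ (13:ℕ) : ℝ) ^ ((1:ℝ)/10) ≤ (r ^ (10:ℕ) : ℝ) ^ ((1:ℝ)/10) :=
    Real.rpow_le_rpow (by positivity) h (by norm_num)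
  rwa [← Real.rpow_natCast lam 13, ← Real.rpow_natCast r 10,
      ← Real.rpow_mul hlam, ← Real.rpow_mul hr,
      show ((13:ℕ):ℝ) * ((1:ℝ)/10) = (1.3:ℝ) by norm_num,
      show ((10:ℕ):ℝ) * ((1:ℝ)/10) = 1 by norm_num,
      Real.rpow_one] at h1

-- rational upper bound for lam^0.7
lemma up07 {lam r : ℝ} (hlam : 0 ≤ lam) (hr : 0 ≤ r) (h : lam ^ 7 ≤ r ^ 10) :
    lam ^ (0.7:ℝ) ≤ r := by
  have h1 : (lam ^ (7:ℕ) : ℝ) ^ ((1:ℝ)/10) ≤ (r ^ (10:ℕ) : ℝ) ^ ((1:ℝ)/10) :=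
    Real.rpow_le_rpow (by positivity) h (by norm_num)
  rwa [← Real.rpow_natCast lam 7, ← Real.rpow_natCast r 10,
      ← Real.rpow_mul hlam, ← Real.rpow_mul hr,
      show ((7:ℕ):ℝ) * ((1:ℝ)/10) = (0.7:ℝ) by norm_num,
      show ((10:ℕ):ℝ) * ((1:ℝ)/10) = 1 by norm_num,
      Real.rpow_one] at h1

-- combined rationalized tangent bound
lemma tanBound {x lam q r : ℝ} (hx : 0 ≤ x) (hlam : 0 < lam) (hq : 0 ≤ q) (hr : 0 ≤ r)
    (h1 : q ^ 10 ≤ lam ^ 3) (h2 : lam ^ 13 ≤ r ^ 10) :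
    -(3/10) * r + (13/10) * q * x ≤ x ^ (1.3:ℝ) := by
  have ht := tan13 hx hlam
  have hq3 := low03 hlam.le hq h1
  have hr3 := up13 hlam.le hr h2
  have key : lam ^ (1.3:ℝ) = lam ^ (0.3:ℝ) * lam := by
    rw [show (1.3:ℝ) = 0.3 + 1 by norm_num, Real.rpow_add hlam, Real.rpow_one]
  nlinarith [mul_le_mul_of_nonneg_right hq3 hx, Real.rpow_nonneg hlam.le (0.3:ℝ),
    mul_le_mul_of_nonneg_right hq3 hlam.le]

-- b^2 ≤ b^1.3 for b in [0,1]
lemma sqle13 {b : ℝ} (hb0 : 0 ≤ b) (hb1 : b ≤ 1) : b ^ 2 ≤ b ^ (1.3:ℝ) := by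
  rcases eq_or_lt_of_le hb0 with h | h
  · rw [← h, Real.zero_rpow (by norm_num : (1.3:ℝ) ≠ 0)]; norm_num
  · have := Real.rpow_le_rpow_of_exponent_ge h hb1 (by norm_num : (1.3:ℝ) ≤ 2)
    rwa [show (2:ℝ) = ((2:ℕ):ℝ) by norm_num, Real.rpow_natCast] at this

lemma caseIpt {x : ℝ} (h1 : 1/2 ≤ x) (h2 : x ≤ 1) :
    4/5 * x^2 + 1/5 ≤ x ^ (1.3:ℝ) := by
  have hx : (0:ℝ) ≤ x := by linarith
  rcases le_or_gt (5/8) x with h | h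
  · have ht := tanBound (x := x) (lam := 1) (q := 1) (r := 1) hx (by norm_num)
      (by norm_num) (by norm_num) (by norm_num) (by norm_num)
    nlinarith [mul_nonneg (by linarith : (0:ℝ) ≤ x - 5/8) (by linarith : (0:ℝ) ≤ 1 - x)]
  · have ht := tanBound (x := x) (lam := 9/16) (q := 0.8414) (r := 0.47335) hx
      (by norm_num) (by norm_num) (by norm_num) (by norm_num) (by norm_num)
    nlinarith [mul_nonneg (by linarith : (0:ℝ) ≤ x - 1/2) (by linarith : (0:ℝ) ≤ 5/8 - x)]

lemma cellLemma {a b c A0 A1 B0 B1 : ℝ} (ha13 : A0 + A1 * a ≤ a ^ (1.3:ℝ))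
    (hb13 : B0 + B1 * b ≤ b ^ (1.3:ℝ)) (hb0 : 0 ≤ b) (hB1 : 0 < B1)
    (hR : 0 < 1 - A0 - B0 - A1 * a)
    (hpoly : (1 - A0 - B0 - A1 * a)^2 ≤ B1^2 * (1 - (a+c)^2))
    (hb2 : 1 - (a+c)^2 ≤ b^2) : 1 ≤ a ^ (1.3:ℝ) + b ^ (1.3:ℝ) := by
  have h1 : 1 - A0 - B0 - A1 * a ≤ B1 * b := by
    nlinarith [mul_nonneg hB1.le hb0]
  linarith

lemma auxMain {a b c : ℝ} (ha0 : 0 ≤ a) (hb0 : 0 ≤ b) (hc0 : 0 ≤ c)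
    (ha1 : a ≤ 1) (hb1 : b ≤ 1) (hca : c ≤ a) (hc : c ≤ 231/1000) (hab : a ≤ b)
    (hcon : 1 ≤ a^2 + b^2 + c^2 + 2*(a*b*c)) :
    1 ≤ a ^ (1.3:ℝ) + b ^ (1.3:ℝ) := by
  rcases le_or_gt (1/2) a with hA | hA
  · -- both a, b ≥ 1/2
    have k1 := caseIpt hA ha1
    have k2 := caseIpt (le_trans hA hab) hb1
    have hS : 1 - c ≤ a^2 + b^2 := by
      nlinarith [mul_nonneg hc0 (sq_nonneg (a - b))]
    linarith
  · have hb2 : 1 - (a+c)^2 ≤ b^2 := by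
      nlinarith [mul_nonneg (mul_nonneg ha0 hc0) (by linarith : (0:ℝ) ≤ 1 - b)]
    rcases le_or_gt a (137/1000) with hA2 | hA2
    · -- tiny a
      have h5 : b^2 ≤ b ^ (1.3:ℝ) := sqle13 hb0 hb1
      have h4 : (a+c)^2 ≤ a ^ (1.3:ℝ) := by
        rcases eq_or_lt_of_le ha0 with h | h
        · have hc' : c = 0 := le_antisymm (by rw [← h] at hca; exact hca) hc0
          rw [← h, hc', Real.zero_rpow (by norm_num : (1.3:ℝ) ≠ 0)]; norm_num
        · have h7 : a ^ (0.7:ℝ) ≤ 1/4 := by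
            calc a ^ (0.7:ℝ) ≤ (137/1000 : ℝ) ^ (0.7:ℝ) :=
                  Real.rpow_le_rpow ha0 hA2 (by norm_num)
              _ ≤ 1/4 := up07 (by norm_num) (by norm_num) (by norm_num)
          have hsplit : a ^ (1.3:ℝ) * a ^ (0.7:ℝ) = a^2 := by
            rw [← Real.rpow_add h, show (1.3:ℝ) + 0.7 = ((2:ℕ):ℝ) by norm_num,
              Real.rpow_natCast]
          have h13pos : 0 < a ^ (1.3:ℝ) := Real.rpow_pos_of_pos h _
          nlinarith [mul_le_mul_of_nonneg_left h7 h13pos.le]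
      linarith
    · rcases le_or_gt a (2/10) with hA3 | hA3
      · refine cellLemma (A0 := -(3/10)*0.09611) (A1 := (13/10)*0.58243)
          (B0 := -(3/10)*0.90998) (B1 := (13/10)*0.97846) ?_ ?_ hb0 (by norm_num) ?_ ?_ hb2
        · exact tanBound ha0 (by norm_num : (0:ℝ) < 165/1000) (by norm_num) (by norm_num)
            (by norm_num) (by norm_num)
        · exact tanBound hb0 (by norm_num : (0:ℝ) < 93/100) (by norm_num) (by norm_num)
            (by norm_num) (by norm_num)
        · nlinarith
        · nlinarith [mul_nonneg (by linarith : (0:ℝ) ≤ a - 137/1000) (by linarith : (0:ℝ) ≤ 2/10 - a),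
            mul_nonneg hc0 (by linarith : (0:ℝ) ≤ a - c), sq_nonneg (a - c)]
      · rcases le_or_gt a (27/100) with hA4 | hA4
        · refine cellLemma (A0 := -(3/10)*0.1522) (A1 := (13/10)*0.64762)
            (B0 := -(3/10)*0.872) (B1 := (13/10)*0.96888) ?_ ?_ hb0 (by norm_num) ?_ ?_ hb2
          · exact tanBound ha0 (by norm_num : (0:ℝ) < 235/1000) (by norm_num) (by norm_num)
              (by norm_num) (by norm_num)
          · exact tanBound hb0 (by norm_num : (0:ℝ) < 9/10) (by norm_num) (by norm_num)
              (by norm_num) (by norm_num)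
          · nlinarith
          · nlinarith [mul_nonneg (by linarith : (0:ℝ) ≤ a - 2/10) (by linarith : (0:ℝ) ≤ 27/100 - a),
              mul_nonneg hc0 (by linarith : (0:ℝ) ≤ a - c),
              mul_nonneg hc0 (by linarith : (0:ℝ) ≤ 231/1000 - c), sq_nonneg (a - c)]
        · rcases le_or_gt a (37/100) with hA5 | hA5
          · refine cellLemma (A0 := -(3/10)*0.22736) (A1 := (13/10)*0.71046)
              (B0 := -(3/10)*0.83441) (B1 := (13/10)*0.95908) ?_ ?_ hb0 (by norm_num) ?_ ?_ hb2
            · exact tanBound ha0 (by norm_num : (0:ℝ) < 32/100) (by norm_num) (by norm_num)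
                (by norm_num) (by norm_num)
            · exact tanBound hb0 (by norm_num : (0:ℝ) < 87/100) (by norm_num) (by norm_num)
                (by norm_num) (by norm_num)
            · nlinarith
            · nlinarith [mul_nonneg (by linarith : (0:ℝ) ≤ a - 27/100) (by linarith : (0:ℝ) ≤ 37/100 - a),
                mul_nonneg hc0 (by linarith : (0:ℝ) ≤ 231/1000 - c), sq_nonneg (a - c)]
          · refine cellLemma (A0 := -(3/10)*0.33382) (A1 := (13/10)*0.77631)
              (B0 := -(3/10)*0.80956) (B1 := (13/10)*0.95241) ?_ ?_ hb0 (by norm_num) ?_ ?_ hb2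
            · exact tanBound ha0 (by norm_num : (0:ℝ) < 43/100) (by norm_num) (by norm_num)
                (by norm_num) (by norm_num)
            · exact tanBound hb0 (by norm_num : (0:ℝ) < 85/100) (by norm_num) (by norm_num)
                (by norm_num) (by norm_num)
            · nlinarith
            · nlinarith [mul_nonneg (by linarith : (0:ℝ) ≤ a - 37/100) (by linarith : (0:ℝ) ≤ 1/2 - a),
                mul_nonneg hc0 (by linarith : (0:ℝ) ≤ 231/1000 - c), sq_nonneg (a - c)]

lemma cos134 : Real.cos 1.34 ≤ 0.231 := by
  have hb := Real.cos_bound (x := 0.335) (by rw [abs_of_pos] <;> norm_num)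
  rw [abs_sub_le_iff] at hb
  have habs : |(0.335:ℝ)| = 0.335 := by rw [abs_of_pos] <;> norm_num
  rw [habs] at hb
  obtain ⟨hb1, hb2⟩ := hb
  have hc1l : (0.943231:ℝ) ≤ Real.cos 0.335 := by norm_num at hb1 hb2 ⊢; linarith
  have hc1u : Real.cos 0.335 ≤ (0.94455:ℝ) := by norm_num at hb1 hb2 ⊢; linarith
  have h067 : Real.cos 0.67 = 2 * Real.cos 0.335 ^ 2 - 1 := by
    rw [show (0.67:ℝ) = 2 * 0.335 by norm_num, Real.cos_two_mul]
  have h134 : Real.cos 1.34 = 2 * Real.cos 0.67 ^ 2 - 1 := by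
    rw [show (1.34:ℝ) = 2 * 0.67 by norm_num, Real.cos_two_mul]
  have hc2l : (0.7793:ℝ) ≤ Real.cos 0.67 := by rw [h067]; nlinarith
  have hc2u : Real.cos 0.67 ≤ (0.78435:ℝ) := by rw [h067]; nlinarith
  rw [h134]; nlinarith


/-- If `u, v, w` are unit vectors in the plane such that the angle between the lines of
`u` and `v` is at least `1.34` and is the largest of the three pairwise line angles, then
`|⟪u, w⟫|^{1.3} + |⟪v, w⟫|^{1.3} ≥ 1`. -/
theorem two_almost_orthogonal (u v w : EuclideanSpace ℝ (Fin 2))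
    (hu : ‖u‖ = 1) (hv : ‖v‖ = 1) (hw : ‖w‖ = 1)
    (huv : 1.34 ≤ Real.arccos |⟪u, v⟫|)
    (huw : Real.arccos |⟪u, w⟫| ≤ Real.arccos |⟪u, v⟫|)
    (hvw : Real.arccos |⟪v, w⟫| ≤ Real.arccos |⟪u, v⟫|) :
    1 ≤ |⟪u, w⟫| ^ (1.3 : ℝ) + |⟪v, w⟫| ^ (1.3 : ℝ) := by
  have hx : ⟪u, w⟫ = u 0 * w 0 + u 1 * w 1 := by
    simp [PiLp.inner_apply, Fin.sum_univ_two, RCLike.inner_apply, conj_trivial]; ring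
  have hy : ⟪v, w⟫ = v 0 * w 0 + v 1 * w 1 := by
    simp [PiLp.inner_apply, Fin.sum_univ_two, RCLike.inner_apply, conj_trivial]; ring
  have hz : ⟪u, v⟫ = u 0 * v 0 + u 1 * v 1 := by
    simp [PiLp.inner_apply, Fin.sum_univ_two, RCLike.inner_apply, conj_trivial]; ring
  have hnu : u 0 * u 0 + u 1 * u 1 = 1 := by
    have h := real_inner_self_eq_norm_sq u
    rw [hu] at h
    simp only [PiLp.inner_apply, Fin.sum_univ_two, RCLike.inner_apply, conj_trivial] at h
    linarith [h]
  have hnv : v 0 * v 0 + v 1 * v 1 = 1 := by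
    have h := real_inner_self_eq_norm_sq v
    rw [hv] at h
    simp only [PiLp.inner_apply, Fin.sum_univ_two, RCLike.inner_apply, conj_trivial] at h
    linarith [h]
  have hnw : w 0 * w 0 + w 1 * w 1 = 1 := by
    have h := real_inner_self_eq_norm_sq w
    rw [hw] at h
    simp only [PiLp.inner_apply, Fin.sum_univ_two, RCLike.inner_apply, conj_trivial] at h
    linarith [h]
  have gram : ⟪u, w⟫^2 + ⟪v, w⟫^2 + ⟪u, v⟫^2 = 1 + 2*(⟪u, w⟫ * ⟪v, w⟫ * ⟪u, v⟫) := by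
    rw [hx, hy, hz]
    linear_combination ((v 0*v 0+v 1*v 1)*(w 0*w 0+w 1*w 1) - (v 0*w 0+v 1*w 1)^2) * hnu
      + ((w 0*w 0+w 1*w 1) - (u 0*w 0+u 1*w 1)^2) * hnv
      + (1 - (u 0*v 0+u 1*v 1)^2) * hnw
  -- abs bounds
  have hxle : |⟪u, w⟫| ≤ 1 := by
    have := abs_real_inner_le_norm u w; rw [hu, hw] at this; linarith
  have hyle : |⟪v, w⟫| ≤ 1 := by
    have := abs_real_inner_le_norm v w; rw [hv, hw] at this; linarith
  have hzle : |⟪u, v⟫| ≤ 1 := by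
    have := abs_real_inner_le_norm u v; rw [hu, hv] at this; linarith
  -- c ≤ a and c ≤ b
  have hca : |⟪u, v⟫| ≤ |⟪u, w⟫| := by
    have h := Real.cos_le_cos_of_nonneg_of_le_pi (Real.arccos_nonneg _)
      (Real.arccos_le_pi _) huw
    rwa [Real.cos_arccos (by linarith [abs_nonneg ⟪u, w⟫]) hxle,
      Real.cos_arccos (by linarith [abs_nonneg ⟪u, v⟫]) hzle] at h
  have hcb : |⟪u, v⟫| ≤ |⟪v, w⟫| := by
    have h := Real.cos_le_cos_of_nonneg_of_le_pi (Real.arccos_nonneg _)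
      (Real.arccos_le_pi _) hvw
    rwa [Real.cos_arccos (by linarith [abs_nonneg ⟪v, w⟫]) hyle,
      Real.cos_arccos (by linarith [abs_nonneg ⟪u, v⟫]) hzle] at h
  have hc231 : |⟪u, v⟫| ≤ 231/1000 := by
    have h := Real.cos_le_cos_of_nonneg_of_le_pi (by norm_num : (0:ℝ) ≤ 1.34)
      (Real.arccos_le_pi _) huv
    rw [Real.cos_arccos (by linarith [abs_nonneg ⟪u, v⟫]) hzle] at h
    calc |⟪u, v⟫| ≤ Real.cos 1.34 := h
      _ ≤ 0.231 := cos134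
      _ = 231/1000 := by norm_num
  -- constraint
  have hneg : -(|⟪u, w⟫| * |⟪v, w⟫| * |⟪u, v⟫|) ≤ ⟪u, w⟫ * ⟪v, w⟫ * ⟪u, v⟫ := by
    rw [← abs_mul, ← abs_mul]; exact neg_abs_le _
  have hcon : 1 ≤ |⟪u, w⟫|^2 + |⟪v, w⟫|^2 + |⟪u, v⟫|^2
      + 2*(|⟪u, w⟫| * |⟪v, w⟫| * |⟪u, v⟫|) := by
    have h1 := sq_abs ⟪u, w⟫
    have h2 := sq_abs ⟪v, w⟫
    have h3 := sq_abs ⟪u, v⟫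
    nlinarith [gram, hneg]
  rcases le_total |⟪u, w⟫| |⟪v, w⟫| with hab | hab
  · exact auxMain (abs_nonneg _) (abs_nonneg _) (abs_nonneg _) hxle hyle hca hc231 hab hcon
  · have hcon' : 1 ≤ |⟪v, w⟫|^2 + |⟪u, w⟫|^2 + |⟪u, v⟫|^2
        + 2*(|⟪v, w⟫| * |⟪u, w⟫| * |⟪u, v⟫|) := by linarith [hcon]; 
    rw [add_comm]
    exact auxMain (abs_nonneg _) (abs_nonneg _) (abs_nonneg _) hyle hxle hcb hc231 hab hcon'
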